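/- Define the binary Shannon entropy H₂(x) = −x·log₂x − (1−x)·log₂(1−x), with the convention 0·log₂0 = 0. For all p, q ∈ (0,1), ((1-p)/(1-pq))·log₂((1-p)/(2(1-pq))) + (p(1-q)/(1-pq))·log₂(p(1-q)/(2(1-pq))) = (H₂(pq) − H₂(p) − p·H₂(q) − (1−pq))/(1−pq). -/
import Mathlib


/-- The binary Shannon entropy `H₂(x) = −x·log₂x − (1−x)·log₂(1−x)`,
with the convention `0·log₂0 = 0` (automatic since `Real.logb 2 0 = 0`). -/
noncomputable def H2 (x : ℝ) : ℝ := -(x * Real.logb 2 x) - (1 - x) * Real.logb 2 (1 - x)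

theorem cross_term_identity (p q : ℝ) (hp : p ∈ Set.Ioo (0:ℝ) 1) (hq : q ∈ Set.Ioo (0:ℝ) 1) :
    ((1 - p) / (1 - p * q)) * Real.logb 2 ((1 - p) / (2 * (1 - p * q))) +
      (p * (1 - q) / (1 - p * q)) * Real.logb 2 (p * (1 - q) / (2 * (1 - p * q))) =
    (H2 (p * q) - H2 p - p * H2 q - (1 - p * q)) / (1 - p * q) := by
  obtain ⟨hp0, hp1⟩ := hp
  obtain ⟨hq0, hq1⟩ := hq
  have hc : 0 < 1 - p * q := by nlinarith
  have ha : (1 - p) ≠ 0 := by linarith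
  have hb : (1 - q) ≠ 0 := by linarith
  have hpne : p ≠ 0 := ne_of_gt hp0
  have hcne : (1 - p * q) ≠ 0 := ne_of_gt hc
  have h2 : (2:ℝ) ≠ 0 := by norm_num
  have h22 : Real.logb 2 2 = 1 := Real.logb_self_eq_one one_lt_two
  unfold H2
  rw [Real.logb_div ha (by positivity), Real.logb_div (mul_ne_zero hpne hb) (by positivity),
    Real.logb_mul h2 hcne, Real.logb_mul hpne hb,
    Real.logb_mul hpne (ne_of_gt hq0), h22]
  field_simp
  ring
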